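/- Let 1 < p < ∞ and let w : ℤ₊ → (0,∞) be a weight, where ℤ₊ = {0,1,2,...}. Define v : ℤ → (0,∞) by v_n := w_{|n|} for n ∈ ℤ. Then w belongs to the Muckenhoupt class A_p(ℤ₊) if and only if v belongs to A_p(ℤ) (and v is symmetric, i.e. v_{−k} = v_k for all k). -/

import Mathlib

/-- The Muckenhoupt ratio of the weight `w` over the interval `{l, ..., n}` of `ℤ₊ = ℕ`:
`(1/|J|) (∑_{k∈J} w_k^p)^{1/p} (∑_{k∈J} w_k^{-q})^{1/q}` with `J = {l,...,n}`. -/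
noncomputable def apRatioN (p q : ℝ) (w : ℕ → ℝ) (l n : ℕ) : ℝ :=
  ((Finset.Icc l n).card : ℝ)⁻¹ * (∑ k ∈ Finset.Icc l n, w k ^ p) ^ (1 / p) *
    (∑ k ∈ Finset.Icc l n, w k ^ (-q)) ^ (1 / q)

/-- `w ∈ A_p(ℤ₊)`: the Muckenhoupt ratios over all intervals are uniformly bounded. -/
def MemApN (p q : ℝ) (w : ℕ → ℝ) : Prop :=
  ∃ C : ℝ, ∀ l n : ℕ, l ≤ n → apRatioN p q w l n ≤ C

/-- The Muckenhoupt ratio of the weight `w` over the interval `{l, ..., n}` of `ℤ`. -/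
noncomputable def apRatioZ (p q : ℝ) (w : ℤ → ℝ) (l n : ℤ) : ℝ :=
  ((Finset.Icc l n).card : ℝ)⁻¹ * (∑ k ∈ Finset.Icc l n, w k ^ p) ^ (1 / p) *
    (∑ k ∈ Finset.Icc l n, w k ^ (-q)) ^ (1 / q)

/-- `w ∈ A_p(ℤ)`: the Muckenhoupt ratios over all intervals are uniformly bounded. -/
def MemApZ (p q : ℝ) (w : ℤ → ℝ) : Prop :=
  ∃ C : ℝ, ∀ l n : ℤ, l ≤ n → apRatioZ p q w l n ≤ C

lemma sum_natAbs_cast (f : ℕ → ℝ) (l n : ℕ) :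
    ∑ k ∈ Finset.Icc (l : ℤ) (n : ℤ), f k.natAbs = ∑ k ∈ Finset.Icc l n, f k := by
  refine Finset.sum_nbij' (fun k => k.natAbs) (fun k => (k : ℤ)) ?_ ?_ ?_ ?_ ?_ <;>
    intro a ha <;> simp [Finset.mem_Icc] at ha ⊢ <;> omega

lemma sum_natAbs_neg (f : ℕ → ℝ) (l n : ℤ) :
    ∑ k ∈ Finset.Icc l n, f k.natAbs = ∑ k ∈ Finset.Icc (-n) (-l), f k.natAbs := by
  refine Finset.sum_nbij' (fun k => -k) (fun k => -k) ?_ ?_ ?_ ?_ ?_ <;>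
    intro a ha <;> simp [Finset.mem_Icc] at ha ⊢ <;> omega

lemma apRatioZ_cast (p q : ℝ) (w : ℕ → ℝ) (l n : ℕ) :
    apRatioZ p q (fun k : ℤ => w k.natAbs) (l : ℤ) (n : ℤ) = apRatioN p q w l n := by
  unfold apRatioZ apRatioN
  rw [sum_natAbs_cast (fun k => w k ^ p), sum_natAbs_cast (fun k => w k ^ (-q))]
  congr 3
  simp [Int.card_Icc, Nat.card_Icc]

lemma apRatioZ_neg (p q : ℝ) (w : ℕ → ℝ) (l n : ℤ) :
    apRatioZ p q (fun k : ℤ => w k.natAbs) l n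
      = apRatioZ p q (fun k : ℤ => w k.natAbs) (-n) (-l) := by
  unfold apRatioZ
  rw [sum_natAbs_neg (fun k => w k ^ p), sum_natAbs_neg (fun k => w k ^ (-q))]
  congr 3
  simp [Int.card_Icc]
  omega

lemma sum_mixed_le (f : ℕ → ℝ) (hf : ∀ k, 0 ≤ f k) (l n : ℤ) (m : ℕ)
    (hl : -(m : ℤ) ≤ l) (hn : n ≤ (m : ℤ)) :
    ∑ k ∈ Finset.Icc l n, f k.natAbs ≤ 2 * ∑ k ∈ Finset.Icc 0 m, f k := by
  have h1 : ∑ k ∈ Finset.Icc l n, f k.natAbs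
      ≤ ∑ k ∈ Finset.Icc (-(m : ℤ)) (m : ℤ), f k.natAbs := by
    apply Finset.sum_le_sum_of_subset_of_nonneg
    · intro x hx; simp [Finset.mem_Icc] at hx ⊢; omega
    · intro i _ _; exact hf _
  have hu : Finset.Icc (-(m : ℤ)) (m : ℤ)
      = Finset.Icc (-(m : ℤ)) 0 ∪ Finset.Icc 0 (m : ℤ) := by
    ext x; simp [Finset.mem_Icc]; omega
  have h2 : ∑ k ∈ Finset.Icc (-(m : ℤ)) (m : ℤ), f k.natAbs
      ≤ (∑ k ∈ Finset.Icc (-(m : ℤ)) 0, f k.natAbs)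
        + ∑ k ∈ Finset.Icc 0 (m : ℤ), f k.natAbs := by
    rw [hu]
    have hin : (0:ℝ) ≤ ∑ k ∈ Finset.Icc (-(m:ℤ)) 0 ∩ Finset.Icc 0 (m:ℤ), f k.natAbs :=
      Finset.sum_nonneg fun i _ => hf _
    have heq := Finset.sum_union_inter (s₁ := Finset.Icc (-(m:ℤ)) 0)
      (s₂ := Finset.Icc 0 (m:ℤ)) (f := fun k => f k.natAbs)
    linarith
  have h3 : ∑ k ∈ Finset.Icc (-(m : ℤ)) 0, f k.natAbs = ∑ k ∈ Finset.Icc 0 m, f k := by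
    rw [sum_natAbs_neg f (-(m : ℤ)) 0]
    simpa using sum_natAbs_cast f 0 m
  have h4 : ∑ k ∈ Finset.Icc (0 : ℤ) (m : ℤ), f k.natAbs = ∑ k ∈ Finset.Icc 0 m, f k := by
    simpa using sum_natAbs_cast f 0 m
  linarith


/-- Let `1 < p < ∞` and let `w : ℤ₊ → (0,∞)` be a weight. Define `v : ℤ → (0,∞)` by
`v_n := w_{|n|}`. Then `w ∈ A_p(ℤ₊)` if and only if `v ∈ A_p(ℤ)` and `v` is symmetric. -/
theorem memApN_iff_symmetric_extension_memApZ (p : ℝ) (hp : 1 < p)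
    (w : ℕ → ℝ) (hw : ∀ k, 0 < w k) :
    MemApN p (p / (p - 1)) w ↔
      (MemApZ p (p / (p - 1)) (fun n : ℤ => w n.natAbs) ∧
        ∀ k : ℤ, w (-k).natAbs = w k.natAbs) := by
  set q : ℝ := p / (p - 1) with hqdef
  have hp0 : 0 < p := by linarith
  have hq0 : 0 < q := by
    apply div_pos <;> linarith
  have hpq : 1 / p + 1 / q = 1 := by
    rw [hqdef]; field_simp; ring
  constructor
  · rintro ⟨C, hC⟩
    refine ⟨⟨2 * C, ?_⟩, fun k => by simp⟩
    -- first: pure intervals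
    have pure : ∀ l n : ℕ, (l : ℤ) ≤ n →
        apRatioZ p q (fun k : ℤ => w k.natAbs) (l : ℤ) (n : ℤ) ≤ C := by
      intro l n h
      rw [apRatioZ_cast]
      exact hC l n (by exact_mod_cast h)
    have hC0 : 0 ≤ C := by
      refine le_trans ?_ (hC 0 0 le_rfl)
      unfold apRatioN
      have s1 : (0:ℝ) ≤ ∑ k ∈ Finset.Icc 0 0, w k ^ p :=
        Finset.sum_nonneg fun i _ => Real.rpow_nonneg (hw i).le _
      have s2 : (0:ℝ) ≤ ∑ k ∈ Finset.Icc 0 0, w k ^ (-q) :=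
        Finset.sum_nonneg fun i _ => Real.rpow_nonneg (hw i).le _
      positivity
    intro l n hln
    rcases le_or_gt 0 l with hl | hl
    · have e : l = ((l.toNat : ℕ) : ℤ) := (Int.toNat_of_nonneg hl).symm
      have e2 : n = ((n.toNat : ℕ) : ℤ) := (Int.toNat_of_nonneg (le_trans hl hln)).symm
      rw [e, e2]
      refine le_trans (pure _ _ ?_) (by linarith)
      omega
    rcases le_or_gt n 0 with hn | hn
    · rw [apRatioZ_neg]
      have e : -n = (((-n).toNat : ℕ) : ℤ) := (Int.toNat_of_nonneg (by omega)).symm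
      have e2 : -l = (((-l).toNat : ℕ) : ℤ) := (Int.toNat_of_nonneg (by omega)).symm
      rw [e, e2]
      refine le_trans (pure _ _ ?_) (by linarith)
      omega
    -- mixed case l < 0 < n
    · set m : ℕ := max (-l).toNat n.toNat with hm
      have hml : -(m : ℤ) ≤ l := by omega
      have hmn : n ≤ (m : ℤ) := by omega
      set Sp : ℝ := ∑ k ∈ Finset.Icc 0 m, w k ^ p with hSp
      set Sq : ℝ := ∑ k ∈ Finset.Icc 0 m, w k ^ (-q) with hSq
      have hSp0 : 0 ≤ Sp := Finset.sum_nonneg fun i _ => Real.rpow_nonneg (hw i).le _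
      have hSq0 : 0 ≤ Sq := Finset.sum_nonneg fun i _ => Real.rpow_nonneg (hw i).le _
      have hA : ∑ k ∈ Finset.Icc l n, w k.natAbs ^ p ≤ 2 * Sp :=
        sum_mixed_le (fun k => w k ^ p) (fun k => Real.rpow_nonneg (hw k).le _) l n m hml hmn
      have hB : ∑ k ∈ Finset.Icc l n, w k.natAbs ^ (-q) ≤ 2 * Sq :=
        sum_mixed_le (fun k => w k ^ (-q)) (fun k => Real.rpow_nonneg (hw k).le _) l n m hml hmn
      have hA0 : 0 ≤ ∑ k ∈ Finset.Icc l n, w k.natAbs ^ p :=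
        Finset.sum_nonneg fun i _ => Real.rpow_nonneg (hw _).le _
      have hB0 : 0 ≤ ∑ k ∈ Finset.Icc l n, w k.natAbs ^ (-q) :=
        Finset.sum_nonneg fun i _ => Real.rpow_nonneg (hw _).le _
      have h1 : (∑ k ∈ Finset.Icc l n, w k.natAbs ^ p) ^ (1/p)
          ≤ (2:ℝ) ^ (1/p) * Sp ^ (1/p) := by
        rw [← Real.mul_rpow (by norm_num) hSp0]
        exact Real.rpow_le_rpow hA0 hA (by positivity)
      have h2 : (∑ k ∈ Finset.Icc l n, w k.natAbs ^ (-q)) ^ (1/q)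
          ≤ (2:ℝ) ^ (1/q) * Sq ^ (1/q) := by
        rw [← Real.mul_rpow (by norm_num) hSq0]
        exact Real.rpow_le_rpow hB0 hB (by positivity)
      have hcard : ((m : ℝ) + 1) ≤ ((Finset.Icc l n).card : ℝ) := by
        have : m + 1 ≤ (Finset.Icc l n).card := by
          rw [Int.card_Icc]; omega
        exact_mod_cast this
      have h3 : ((Finset.Icc l n).card : ℝ)⁻¹ ≤ ((m : ℝ) + 1)⁻¹ := by
        apply inv_anti₀ (by positivity) hcard
      have key : apRatioZ p q (fun k : ℤ => w k.natAbs) l n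
          ≤ ((m : ℝ) + 1)⁻¹ * ((2:ℝ) ^ (1/p) * Sp ^ (1/p)) * ((2:ℝ) ^ (1/q) * Sq ^ (1/q)) := by
        unfold apRatioZ
        have t1 : (0:ℝ) ≤ (∑ k ∈ Finset.Icc l n, w k.natAbs ^ p) ^ (1/p) :=
          Real.rpow_nonneg hA0 _
        have t2 : (0:ℝ) ≤ (∑ k ∈ Finset.Icc l n, w k.natAbs ^ (-q)) ^ (1/q) :=
          Real.rpow_nonneg hB0 _
        have t3 : (0:ℝ) ≤ ((Finset.Icc l n).card : ℝ)⁻¹ := by positivity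
        apply mul_le_mul
        · apply mul_le_mul h3 h1 t1 (by positivity)
        · exact h2
        · exact t2
        · positivity
      refine le_trans key ?_
      have e2 : ((m : ℝ) + 1)⁻¹ * ((2:ℝ) ^ (1/p) * Sp ^ (1/p)) * ((2:ℝ) ^ (1/q) * Sq ^ (1/q))
          = ((2:ℝ) ^ (1/p) * (2:ℝ) ^ (1/q)) * apRatioN p q w 0 m := by
        unfold apRatioN
        rw [← hSp, ← hSq, Nat.card_Icc]
        push_cast
        ring
      rw [e2, ← Real.rpow_add (by norm_num : (0:ℝ) < 2), hpq, Real.rpow_one]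
      have := hC 0 m (Nat.zero_le m)
      linarith
  · rintro ⟨⟨C, hC⟩, _⟩
    refine ⟨C, fun l n h => ?_⟩
    rw [← apRatioZ_cast]
    exact hC l n (by exact_mod_cast h)
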